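/- (Polynomial Dehn–Sommerville relation for reciprocal complexes, f-version.) Let Δ be a reciprocal simplicial complex of dimension d−1. Then the polynomial identity (−1)^d · ∑_{i=0}^d f_{i−1} x^i = ∑_{i=1}^d f^int_{i−1} (−x−1)^i + m_∅ holds in ℤ[x], where m_∅ = ∑_{G ∈ Δ} (−1)^{d−|G|} = (−1)^{d−1} χ̃(Δ). -/

import Mathlib

open Polynomial Finset

/-- A (finite, abstract) simplicial complex: a finite collection of finite subsets of `V`
containing the empty set and closed under taking subsets. -/
def IsSimplicialComplex {V : Type*} [DecidableEq V] (Δ : Finset (Finset V)) : Prop :=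
  ∅ ∈ Δ ∧ ∀ F ∈ Δ, ∀ G ⊆ F, G ∈ Δ

/-- `Δ` has dimension `d - 1`: every face has at most `d` elements and some face has
exactly `d` elements. -/
def HasDimension {V : Type*} [DecidableEq V] (Δ : Finset (Finset V)) (d : ℕ) : Prop :=
  (∀ F ∈ Δ, F.card ≤ d) ∧ ∃ F ∈ Δ, F.card = d

/-- `fnum Δ i` is the number of faces of `Δ` with exactly `i` elements, i.e. `f_{i-1}`. -/
def fnum {V : Type*} [DecidableEq V] (Δ : Finset (Finset V)) (i : ℕ) : ℕ :=
  (Δ.filter fun F => F.card = i).card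

/-- The multiplicity `m_F = ∑_{G ∈ Δ, F ⊆ G} (−1)^{d−|G|}` of a face `F` of a complex of
dimension `d − 1` (all faces `G` satisfy `|G| ≤ d`, so `d - G.card` is the usual subtraction). -/
def mult {V : Type*} [DecidableEq V] (Δ : Finset (Finset V)) (d : ℕ) (F : Finset V) : ℤ :=
  ∑ G ∈ Δ.filter (fun G => F ⊆ G), (-1 : ℤ) ^ (d - G.card)

/-- The reduced Euler characteristic `χ̃(Γ) = ∑_{G ∈ Γ} (−1)^{|G|−1}`; the exponent is
written `|G| + 1`, which has the same parity as `|G| − 1` (the empty face contributes `−1`). -/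
def chiTilde {V : Type*} [DecidableEq V] (Γ : Finset (Finset V)) : ℤ :=
  ∑ G ∈ Γ, (-1 : ℤ) ^ (G.card + 1)

/-- The link of a face `F` in `Δ`. -/
def link {V : Type*} [DecidableEq V] (Δ : Finset (Finset V)) (F : Finset V) :
    Finset (Finset V) :=
  Δ.filter fun G => G ∩ F = ∅ ∧ G ∪ F ∈ Δ

/-- `Δ` (of dimension `d − 1`) is reciprocal if `m_F ∈ {0, 1}` for every nonempty face. -/
def IsReciprocal {V : Type*} [DecidableEq V] (Δ : Finset (Finset V)) (d : ℕ) : Prop :=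
  ∀ F ∈ Δ, F ≠ ∅ → mult Δ d F = 0 ∨ mult Δ d F = 1

/-- `Δ` (of dimension `d − 1`) is semi-Eulerian if `m_F = 1` for every nonempty face. -/
def IsSemiEulerian {V : Type*} [DecidableEq V] (Δ : Finset (Finset V)) (d : ℕ) : Prop :=
  ∀ F ∈ Δ, F ≠ ∅ → mult Δ d F = 1

/-- `fint Δ d i` is the number of interior faces (nonempty faces with `m_F = 1`) of `Δ`
with exactly `i` elements, i.e. `f^int_{i-1}`. -/
def fint {V : Type*} [DecidableEq V] (Δ : Finset (Finset V)) (d : ℕ) (i : ℕ) : ℕ :=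
  (Δ.filter fun F => F.card = i ∧ F ≠ ∅ ∧ mult Δ d F = 1).card

lemma sum_powerset_pow {V : Type*} [DecidableEq V] (G : Finset V) (y : ℤ[X]) :
    ∑ F ∈ G.powerset, y ^ F.card = (y + 1) ^ G.card := by
  have h := Finset.prod_add (fun _ : V => y) (fun _ => (1 : ℤ[X])) G
  simp [Finset.prod_const] at h
  rw [← h]

theorem polynomial_DS_reciprocal {V : Type*} [DecidableEq V] (Δ : Finset (Finset V)) (d : ℕ)
    (hd : 1 ≤ d) (hΔ : IsSimplicialComplex Δ) (hdim : HasDimension Δ d)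
    (hrec : IsReciprocal Δ d) :
    C ((-1 : ℤ) ^ d) * (∑ i ∈ range (d + 1), C ((fnum Δ i : ℤ)) * X ^ i)
      = (∑ i ∈ Icc 1 d, C ((fint Δ d i : ℤ)) * (-X - 1) ^ i) + C (mult Δ d ∅) := by
  classical
  obtain ⟨hempty, hclosed⟩ := hΔ
  obtain ⟨hle, -⟩ := hdim
  -- Step A: LHS sum as sum over faces
  have hA : (∑ i ∈ range (d + 1), C ((fnum Δ i : ℤ)) * X ^ i) = ∑ G ∈ Δ, X ^ G.card := by
    rw [← Finset.sum_fiberwise_of_maps_to (g := fun G : Finset V => G.card)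
      (fun G hG => Finset.mem_range.mpr (Nat.lt_succ_of_le (hle G hG)))]
    refine Finset.sum_congr rfl fun i _ => ?_
    rw [Finset.sum_congr rfl (fun G hG => by rw [(Finset.mem_filter.mp hG).2]),
      Finset.sum_const, nsmul_eq_mul]
    simp [fnum]
  -- Step B: interior sum as sum over interior faces
  set N : Finset (Finset V) := Δ.filter (fun F => F ≠ ∅) with hN
  set E : Finset (Finset V) := Δ.filter (fun F => F ≠ ∅ ∧ mult Δ d F = 1) with hE
  have hB : (∑ i ∈ Icc 1 d, C ((fint Δ d i : ℤ)) * (-X - 1) ^ i)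
      = ∑ F ∈ E, (-X - 1 : ℤ[X]) ^ F.card := by
    rw [← Finset.sum_fiberwise_of_maps_to (g := fun F : Finset V => F.card)
      (fun F hF => ?_)]
    · refine Finset.sum_congr rfl fun i _ => ?_
      rw [Finset.sum_congr rfl (fun F hF => by rw [(Finset.mem_filter.mp hF).2]),
        Finset.sum_const, nsmul_eq_mul]
      have : fint Δ d i = (E.filter (fun F => F.card = i)).card := by
        rw [hE, Finset.filter_filter]
        unfold fint
        congr 1
        apply Finset.filter_congr
        intro F _
        tauto
      simp [this]
    · rw [hE, Finset.mem_filter] at hF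
      obtain ⟨hFΔ, hFne, -⟩ := hF
      exact Finset.mem_Icc.mpr ⟨Finset.card_pos.mpr (Finset.nonempty_iff_ne_empty.mpr hFne),
        hle F hFΔ⟩
  -- Step C: replace with multiplicity-weighted sum over nonempty faces
  have hC : (∑ F ∈ E, (-X - 1 : ℤ[X]) ^ F.card)
      = ∑ F ∈ N, C (mult Δ d F) * (-X - 1 : ℤ[X]) ^ F.card := by
    have hEN : E = N.filter (fun F => mult Δ d F = 1) := by
      rw [hE, hN, Finset.filter_filter]
    rw [hEN, Finset.sum_filter]
    refine Finset.sum_congr rfl fun F hF => ?_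
    rw [hN, Finset.mem_filter] at hF
    rcases hrec F hF.1 hF.2 with h0 | h1
    · rw [if_neg (by rw [h0]; norm_num), h0]; simp
    · rw [if_pos h1, h1]; simp
  -- Step D: swap the double sum
  have hD : (∑ F ∈ N, C (mult Δ d F) * (-X - 1 : ℤ[X]) ^ F.card)
      = ∑ G ∈ Δ, ∑ F ∈ G.powerset.filter (fun F => F ≠ ∅),
          C ((-1 : ℤ) ^ (d - G.card)) * (-X - 1 : ℤ[X]) ^ F.card := by
    have : ∀ F ∈ N, C (mult Δ d F) * (-X - 1 : ℤ[X]) ^ F.card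
        = ∑ G ∈ Δ.filter (fun G => F ⊆ G),
            C ((-1 : ℤ) ^ (d - G.card)) * (-X - 1 : ℤ[X]) ^ F.card := by
      intro F _
      rw [mult, map_sum, Finset.sum_mul]
    rw [Finset.sum_congr rfl this]
    refine Finset.sum_comm' fun F G => ?_
    simp only [hN, Finset.mem_filter, Finset.mem_powerset]
    constructor
    · rintro ⟨⟨hFΔ, hFne⟩, hGΔ, hFG⟩
      exact ⟨⟨hFG, hFne⟩, hGΔ⟩
    · rintro ⟨⟨hFG, hFne⟩, hGΔ⟩
      exact ⟨⟨hclosed G hGΔ F hFG, hFne⟩, hGΔ, hFG⟩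
  -- Step E: compute the inner sum
  have hInner : ∀ G ∈ Δ, (∑ F ∈ G.powerset.filter (fun F => F ≠ ∅),
        C ((-1 : ℤ) ^ (d - G.card)) * (-X - 1 : ℤ[X]) ^ F.card)
      = C ((-1 : ℤ) ^ d) * X ^ G.card - C ((-1 : ℤ) ^ (d - G.card)) := by
    intro G hG
    rw [← Finset.mul_sum, Finset.filter_ne']
    have h1 : (∑ F ∈ G.powerset.erase ∅, (-X - 1 : ℤ[X]) ^ F.card)
        = (-X : ℤ[X]) ^ G.card - 1 := by
      have h2 : (-X - 1 : ℤ[X]) ^ (∅ : Finset V).card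
            + ∑ F ∈ G.powerset.erase ∅, (-X - 1 : ℤ[X]) ^ F.card
          = ∑ F ∈ G.powerset, (-X - 1 : ℤ[X]) ^ F.card :=
        Finset.add_sum_erase _ (fun F : Finset V => (-X - 1 : ℤ[X]) ^ F.card) (Finset.empty_mem_powerset G)
      rw [sum_powerset_pow] at h2
      simp only [Finset.card_empty, pow_zero] at h2
      have : (-X - 1 + 1 : ℤ[X]) = -X := by ring
      rw [this] at h2
      linear_combination h2
    rw [h1]
    have hpow : ((-1 : ℤ) ^ (d - G.card)) * ((-1 : ℤ) ^ G.card) = (-1 : ℤ) ^ d := by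
      rw [← pow_add, Nat.sub_add_cancel (hle G hG)]
    rw [mul_sub, mul_one]
    congr 1
    rw [neg_pow (X : ℤ[X])]
    have hc : ((-1 : ℤ[X]) ^ G.card) = C ((-1 : ℤ) ^ G.card) := by simp
    rw [hc, ← mul_assoc, ← C_mul, hpow]
  -- Assemble
  rw [hA, hB, hC, hD, Finset.sum_congr rfl hInner, Finset.sum_sub_distrib]
  have hm : C (mult Δ d ∅) = ∑ G ∈ Δ, C ((-1 : ℤ) ^ (d - G.card)) := by
    rw [mult, Finset.filter_true_of_mem (fun G _ => Finset.empty_subset G), map_sum]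
  rw [hm, Finset.mul_sum]
  ring
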